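/- Let u : cl(Ω) × S¹ → ℝ be continuous such that for every θ ∈ (−π, π] the function z ↦ u(z, e^{iθ}) is continuously differentiable on Ω and satisfies the transport equation cos θ · ∂_{x₁} u(z, e^{iθ}) + sin θ · ∂_{x₂} u(z, e^{iθ}) = 0 for all z ∈ Ω, and u(e^{iβ}, e^{iθ}) = 0 whenever cos(θ − β) < 0 (i.e., u vanishes on the influx boundary Γ₋). Then u is identically zero on cl(Ω) × S¹. -/

import Mathlib

open MeasureTheory Filter Set

noncomputable section

/-- The point `e^{iβ}` on the unit circle `Γ`. -/
def circlePoint (β : ℝ) : ℂ := Complex.exp (Complex.I * β)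

/-- Uniqueness for the homogeneous transport boundary value problem: a continuous
solution `u` of `θ·∇u = 0` in `Ω` vanishing on the influx boundary `Γ₋` vanishes
identically on `cl(Ω) × S¹`. -/
theorem stmt15 (u : ℂ → ℝ → ℝ)
    (hper : ∀ z : ℂ, ∀ θ : ℝ, u z (θ + 2 * Real.pi) = u z θ)
    (hcont : ContinuousOn (fun q : ℂ × ℝ => u q.1 q.2)
      (Metric.closedBall (0 : ℂ) 1 ×ˢ (univ : Set ℝ)))
    (hdiff : ∀ θ : ℝ, ContDiffOn ℝ 1 (fun z : ℂ => u z θ) (Metric.ball (0 : ℂ) 1))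
    (htransport : ∀ θ : ℝ, ∀ z : ℂ, z ∈ Metric.ball (0 : ℂ) 1 →
      Real.cos θ * (fderiv ℝ (fun w : ℂ => u w θ) z) 1 +
        Real.sin θ * (fderiv ℝ (fun w : ℂ => u w θ) z) Complex.I = 0)
    (hbdry : ∀ β θ : ℝ, Real.cos (θ - β) < 0 → u (circlePoint β) θ = 0) :
    ∀ z : ℂ, z ∈ Metric.closedBall (0 : ℂ) 1 → ∀ θ : ℝ, u z θ = 0 := by
  -- helper: norms vs normSq
  have hlt : ∀ w : ℂ, Complex.normSq w < 1 → w ∈ Metric.ball (0:ℂ) 1 := by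
    intro w h
    rw [Metric.mem_ball, dist_zero_right]
    nlinarith [Complex.sq_norm w, norm_nonneg w]
  have hle : ∀ w : ℂ, Complex.normSq w ≤ 1 → w ∈ Metric.closedBall (0:ℂ) 1 := by
    intro w h
    rw [Metric.mem_closedBall, dist_zero_right]
    nlinarith [Complex.sq_norm w, norm_nonneg w]
  have key : ∀ z : ℂ, z ∈ Metric.ball (0:ℂ) 1 → ∀ θ : ℝ, u z θ = 0 := by
    intro z hz θ
    have hz1 : Complex.normSq z < 1 := by
      rw [Metric.mem_ball, dist_zero_right] at hz
      nlinarith [Complex.sq_norm z, norm_nonneg z]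
    set d : ℂ := Complex.exp ((θ:ℂ) * Complex.I) with hd
    have hdre : d.re = Real.cos θ := by
      rw [hd, Complex.exp_ofReal_mul_I_re]
    have hdim : d.im = Real.sin θ := by
      rw [hd, Complex.exp_ofReal_mul_I_im]
    have hd2 : d.re ^ 2 + d.im ^ 2 = 1 := by
      rw [hdre, hdim]
      nlinarith [Real.sin_sq_add_cos_sq θ]
    set s : ℝ := z.re * d.re + z.im * d.im with hs
    set D : ℝ := Real.sqrt (s ^ 2 + 1 - Complex.normSq z) with hDdef
    have hD2 : D ^ 2 = s ^ 2 + 1 - Complex.normSq z := by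
      rw [hDdef]
      exact Real.sq_sqrt (by nlinarith)
    have hDpos : 0 < D := by
      rw [hDdef]
      apply Real.sqrt_pos.mpr
      nlinarith
    have hsD : |s| < D := by
      rw [abs_lt]
      constructor <;> nlinarith
    set a : ℝ := -s - D with ha
    have ha0 : a < 0 := by
      have := abs_lt.mp hsD
      rw [ha]; linarith
    have hquad : ∀ t : ℝ, Complex.normSq (z + t • d)
        = Complex.normSq z + 2 * t * s + t ^ 2 := by
      intro t
      simp only [Complex.normSq_apply, Complex.add_re, Complex.add_im,
        Complex.real_smul, Complex.mul_re, Complex.mul_im, Complex.ofReal_re,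
        Complex.ofReal_im, hs]
      ring_nf
      nlinarith [hd2]
    -- points on the half-open characteristic segment lie in the open ball
    have hmem : ∀ t ∈ Ioc a 0, z + t • d ∈ Metric.ball (0:ℂ) 1 := by
      intro t ht
      apply hlt
      rw [hquad]
      have h1 : a < t := ht.1
      have h2 : t ≤ 0 := ht.2
      have habs := abs_lt.mp hsD
      nlinarith
    have hmemc : ∀ t ∈ Icc a 0, z + t • d ∈ Metric.closedBall (0:ℂ) 1 := by
      intro t ht
      apply hle
      rw [hquad]
      have h1 : a ≤ t := ht.1
      have h2 : t ≤ 0 := ht.2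
      have habs := abs_lt.mp hsD
      nlinarith
    -- derivative of u along the characteristic is zero
    have hG : ∀ x : ℝ, z + x • d ∈ Metric.ball (0:ℂ) 1 →
        HasDerivAt (fun t : ℝ => u (z + t • d) θ) 0 x := by
      intro x hx
      have hL : HasDerivAt (fun t : ℝ => z + t • d) d x := by
        simpa using ((hasDerivAt_id x).smul_const d).const_add z
      have hud : DifferentiableAt ℝ (fun w => u w θ) (z + x • d) :=
        ((hdiff θ).differentiableOn one_ne_zero).differentiableAt
          (Metric.isOpen_ball.mem_nhds hx)
      have hcomp := hud.hasFDerivAt.comp_hasDerivAt x hL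
      have hdec : d = (Real.cos θ) • (1:ℂ) + (Real.sin θ) • Complex.I := by
        apply Complex.ext
        · rw [hdre]; simp [Complex.cos_ofReal_re]
        · rw [hdim]; simp [Complex.sin_ofReal_re]
      have hzero : (fderiv ℝ (fun w => u w θ) (z + x • d)) d = 0 := by
        set f := fderiv ℝ (fun w => u w θ) (z + x • d) with hf
        rw [hdec]
        simp only [_root_.map_add, _root_.map_smul, smul_eq_mul]
        exact htransport θ _ hx
      rwa [hzero] at hcomp
    -- constancy along the half-open segment
    have hconst : ∀ t ∈ Ioc a 0, u (z + t • d) θ = u z θ := by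
      intro t ht
      have hsub : Icc t 0 ⊆ Ioc a 0 := fun x hx => ⟨lt_of_lt_of_le ht.1 hx.1, hx.2⟩
      have hcont' : ContinuousOn (fun t : ℝ => u (z + t • d) θ) (Icc t 0) := by
        intro x hx
        exact ((hG x (hmem x (hsub hx))).continuousAt).continuousWithinAt
      have hderiv' : ∀ x ∈ Ico t 0, HasDerivWithinAt
          (fun t : ℝ => u (z + t • d) θ) 0 (Ici x) x := by
        intro x hx
        exact (hG x (hmem x (hsub ⟨hx.1, le_of_lt hx.2⟩))).hasDerivWithinAt
      have := constant_of_has_deriv_right_zero hcont' hderiv' 0 ⟨ht.2, le_refl 0⟩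
      simpa using this.symm
    -- the backward endpoint lies on the circle
    set p : ℂ := z + a • d with hpdef
    have hpnorm : Complex.normSq p = 1 := by
      rw [hpdef, hquad]
      nlinarith
    have habsp : ‖p‖ = 1 := by
      rw [Complex.norm_def, hpnorm, Real.sqrt_one]
    -- u vanishes at the backward endpoint
    have hp0 : p ≠ 0 := by
      intro h
      rw [h] at hpnorm
      simp at hpnorm
    have hpβ : circlePoint p.arg = p := by
      have h := Complex.norm_mul_exp_arg_mul_I p
      rw [habsp] at h
      simpa [circlePoint, mul_comm] using h
    have hcosneg : Real.cos (θ - p.arg) < 0 := by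
      rw [Real.cos_sub, Complex.cos_arg hp0, Complex.sin_arg, habsp]
      have hval : Real.cos θ * p.re + Real.sin θ * p.im = s + a := by
        rw [hpdef]
        simp only [Complex.add_re, Complex.add_im, Complex.real_smul,
          Complex.mul_re, Complex.mul_im, Complex.ofReal_re, Complex.ofReal_im, hs]
        rw [← hdre, ← hdim]
        nlinarith [hd2]
      simp only [div_one]
      rw [hval, ha]
      linarith
    have hup : u p θ = 0 := by
      rw [← hpβ]
      exact hbdry p.arg θ hcosneg
    -- pass to the limit along the segment via continuity
    have hGcont : ContinuousOn (fun t : ℝ => u (z + t • d) θ) (Icc a 0) := by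
      have hmap : MapsTo (fun t : ℝ => ((z + t • d : ℂ), θ))
          (Icc a 0) (Metric.closedBall (0:ℂ) 1 ×ˢ (univ : Set ℝ)) := by
        intro t ht
        exact ⟨hmemc t ht, mem_univ θ⟩
      exact hcont.comp (Continuous.continuousOn
        ((continuous_const.add (continuous_id.smul continuous_const)).prodMk
          continuous_const)) hmap
    have heq : EqOn (fun t : ℝ => u (z + t • d) θ) (fun _ => u z θ) (Icc a 0) := by
      have h1 : EqOn (fun t : ℝ => u (z + t • d) θ) (fun _ => u z θ) (Ioc a 0) :=
        fun t ht => hconst t ht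
      have hcl : closure (Ioc a 0) = Icc a 0 := closure_Ioc (ne_of_lt ha0)
      exact h1.of_subset_closure hGcont continuousOn_const
        Ioc_subset_Icc_self (by rw [hcl])
    have := heq ⟨le_refl a, le_of_lt ha0⟩
    simp only at this
    rw [← hpdef] at this
    rw [← this, hup]
  -- extend to the closed ball by continuity
  intro z hzc θ
  have hucont : ContinuousOn (fun w : ℂ => u w θ) (Metric.closedBall (0:ℂ) 1) := by
    have hmap : MapsTo (fun w : ℂ => ((w : ℂ), θ))
        (Metric.closedBall (0:ℂ) 1) (Metric.closedBall (0:ℂ) 1 ×ˢ (univ : Set ℝ)) :=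
      fun w hw => ⟨hw, mem_univ θ⟩
    exact hcont.comp (Continuous.continuousOn
      (continuous_id.prodMk continuous_const)) hmap
  have hcl : closure (Metric.ball (0:ℂ) 1) = Metric.closedBall (0:ℂ) 1 :=
    closure_ball 0 one_ne_zero
  have h1 : EqOn (fun w : ℂ => u w θ) (fun _ => (0:ℝ)) (Metric.ball (0:ℂ) 1) :=
    fun w hw => key w hw θ
  have h2 := h1.of_subset_closure hucont continuousOn_const
    Metric.ball_subset_closedBall (by rw [hcl])
  exact h2 hzc
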